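/- arXiv:1609.04126 — 3 statements merged into one kernel-verified Lean document; each statement's English description precedes it below -/
import Mathlib

section
/- For the operator T₁φ = iωφ + iKf₁·(∫φg dω)·1 on L²(ℝ, g(ω)dω), a complex number λ not in i·supp(g) is an eigenvalue of T₁ if and only if ∫_ℝ g(ω)/(λ − iω) dω = 1/(iKf₁), and in that case v(ω) = 1/(λ − iω) is an associated eigenfunction. -/
open Complex Real MeasureTheory

/-- For `T₁ φ = iω φ + iK f₁ (∫ φ g) · 1` on `L²(ℝ, g(ω)dω)`, a complex number `λ`
not in `i · supp g` is an eigenvalue of `T₁` iff `∫ g(ω)/(λ - iω) dω = 1/(iKf₁)`,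
and in that case `v(ω) = 1/(λ - iω)` is an associated eigenfunction. -/
theorem eigenvalue_characterization
    (g : ℝ → ℝ) (hg : Integrable g) (hg0 : ∀ ω, 0 ≤ g ω)
    (hgmass : ∫ ω, g ω = 1)
    (K : ℝ) (hK : 0 < K) (f₁ : ℂ) (hf₁ : f₁ ≠ 0)
    (μ : Measure ℝ) (hμ : μ = MeasureTheory.volume.withDensity (fun ω => ENNReal.ofReal (g ω)))
    (lam : ℂ) (hlam : ∀ ω ∈ tsupport g, lam ≠ Complex.I * ω) :
    ((∃ φ : ℝ → ℂ, MemLp φ 2 μ ∧ ¬(φ =ᵐ[μ] 0) ∧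
        (Integrable φ μ) ∧
        (∀ᵐ (ω : ℝ) ∂μ, Complex.I * (ω : ℂ) * φ ω + Complex.I * K * f₁ * (∫ x, φ x ∂μ) = lam * φ ω))
      ↔ (∫ ω : ℝ, (g ω : ℂ) / (lam - Complex.I * ω)) = 1 / (Complex.I * K * f₁)) ∧
    ((∫ ω : ℝ, (g ω : ℂ) / (lam - Complex.I * ω)) = 1 / (Complex.I * K * f₁) →
      ∀ᵐ (ω : ℝ) ∂μ, Complex.I * (ω : ℂ) * (1 / (lam - Complex.I * (ω : ℂ))) +
          Complex.I * K * f₁ * (∫ x : ℝ, 1 / (lam - Complex.I * (x : ℂ)) ∂μ) =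
        lam * (1 / (lam - Complex.I * (ω : ℂ)))) := by
  subst hμ
  set μ := MeasureTheory.volume.withDensity (fun ω => ENNReal.ofReal (g ω)) with hμdef
  set S := tsupport g with hSdef
  have hSclosed : IsClosed S := isClosed_tsupport g
  have hSmeas : MeasurableSet S := hSclosed.measurableSet
  have hiKf : Complex.I * K * f₁ ≠ 0 := by
    apply mul_ne_zero (mul_ne_zero Complex.I_ne_zero ?_) hf₁
    exact_mod_cast ne_of_gt hK
  -- a.e. in the support
  have hμS : ∀ᵐ ω ∂μ, ω ∈ S := by
    rw [ae_iff]
    have h1 : {ω | ¬ ω ∈ S} = Sᶜ := rfl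
    rw [h1, hμdef, withDensity_apply _ hSmeas.compl]
    have h2 : ∫⁻ ω in Sᶜ, ENNReal.ofReal (g ω) ∂volume = ∫⁻ _ in Sᶜ, 0 ∂volume := by
      apply setLIntegral_congr_fun hSmeas.compl
      intro ω hω
      simp only [image_eq_zero_of_notMem_tsupport hω, ENNReal.ofReal_zero]
    rw [h2, lintegral_zero]
  have hne : ∀ ω ∈ S, lam - Complex.I * ω ≠ 0 := fun ω hω => sub_ne_zero.mpr (hlam ω hω)
  haveI : IsFiniteMeasure μ := by
    apply isFiniteMeasure_withDensity
    have : ∫⁻ a, ENNReal.ofReal (g a) ∂volume = ∫⁻ a, ‖g a‖₊ ∂volume := by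
      apply lintegral_congr
      intro a
      rw [← enorm_eq_nnnorm, ← ofReal_norm_eq_enorm, Real.norm_eq_abs, _root_.abs_of_nonneg (hg0 a)]
    rw [this]
    exact hg.2.ne
  -- converting μ-integrals to volume integrals with density g
  have hconv : ∀ h : ℝ → ℂ, ∫ ω, h ω ∂μ = ∫ ω, (g ω : ℂ) * h ω := by
    intro h
    have hf : AEMeasurable (fun ω => (g ω).toNNReal) volume :=
      measurable_real_toNNReal.comp_aemeasurable hg.aemeasurable
    have : μ = volume.withDensity (fun ω => ((g ω).toNNReal : ENNReal)) := rfl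
    rw [this, integral_withDensity_eq_integral_smul₀ hf]
    apply integral_congr_ae
    filter_upwards with ω
    rw [NNReal.smul_def, Real.coe_toNNReal _ (hg0 ω), Complex.real_smul]
  set v : ℝ → ℂ := fun ω => 1 / (lam - Complex.I * ω) with hvdef
  set J : ℂ := ∫ ω : ℝ, (g ω : ℂ) / (lam - Complex.I * ω) with hJdef
  have hIv : ∫ ω, v ω ∂μ = J := by
    rw [hconv v, hJdef]
    apply integral_congr_ae
    filter_upwards with ω
    rw [hvdef]
    simp [div_eq_mul_inv]
  -- measurability of v
  have hvmeas : Measurable v := by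
    rw [hvdef]
    simp only [one_div]
    exact (measurable_const.sub (Complex.measurable_ofReal.const_mul _)).inv
  -- uniform lower bound on |lam - iω| on S
  have hbound : ∃ ε : ℝ, 0 < ε ∧ ∀ ω ∈ S, ε ≤ ‖lam - Complex.I * ω‖ := by
    have hre : ∀ ω : ℝ, (lam - Complex.I * ω).re = lam.re := by
      intro ω; simp
    have him : ∀ ω : ℝ, (lam - Complex.I * ω).im = lam.im - ω := by
      intro ω; simp
    by_cases h : lam.re = 0
    · have ha : lam.im ∉ S := by
        intro hmem
        exact hlam lam.im hmem (by apply Complex.ext <;> simp [h])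
      obtain ⟨ε, hε, hball⟩ := Metric.isOpen_iff.mp hSclosed.isOpen_compl lam.im ha
      refine ⟨ε, hε, fun ω hω => ?_⟩
      have hd : ε ≤ |lam.im - ω| := by
        by_contra hlt
        push_neg at hlt
        have : ω ∈ Metric.ball lam.im ε := by
          rw [Metric.mem_ball, Real.dist_eq, abs_sub_comm]
          exact hlt
        exact (hball this) hω
      calc ε ≤ |lam.im - ω| := hd
        _ = |(lam - Complex.I * ω).im| := by rw [him]
        _ ≤ ‖lam - Complex.I * ω‖ := Complex.abs_im_le_norm _
    · refine ⟨|lam.re|, abs_pos.mpr h, fun ω _ => ?_⟩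
      calc |lam.re| = |(lam - Complex.I * ω).re| := by rw [hre]
        _ ≤ ‖lam - Complex.I * ω‖ := Complex.abs_re_le_norm _
  obtain ⟨ε, hε, hεle⟩ := hbound
  have hvbd : ∀ ω ∈ S, ‖v ω‖ ≤ 1 / ε := by
    intro ω hω
    rw [hvdef]
    simp only [norm_div, norm_one]
    apply div_le_div_of_nonneg_left zero_le_one hε (hεle ω hω)
  constructor
  · constructor
    · -- forward: eigenvalue implies integral condition
      rintro ⟨φ, hφ2, hφ0, hφint, heq⟩
      set c : ℂ := ∫ x, φ x ∂μ with hcdef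
      have hφv : ∀ᵐ ω ∂μ, φ ω = Complex.I * K * f₁ * c * v ω := by
        filter_upwards [hμS, heq] with ω hω heqω
        have hne' := hne ω hω
        rw [hvdef]
        simp only [mul_one_div]
        rw [eq_div_iff hne']
        linear_combination -heqω
      have hc : c = Complex.I * K * f₁ * c * J := by
        calc c = ∫ x, Complex.I * K * f₁ * c * v x ∂μ := integral_congr_ae hφv
          _ = Complex.I * K * f₁ * c * ∫ x, v x ∂μ := integral_const_mul _ _
          _ = Complex.I * K * f₁ * c * J := by rw [hIv]
      have hc0 : c ≠ 0 := by
        intro h0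
        apply hφ0
        filter_upwards [hφv] with ω hω
        rw [hω, h0]
        simp
      have hkey : Complex.I * K * f₁ * J = 1 :=
        mul_left_cancel₀ hc0 (by rw [mul_one]; linear_combination -hc)
      rw [eq_div_iff hiKf]
      linear_combination hkey
    · -- backward: integral condition implies eigenvalue exists
      intro hJ1
      set φ : ℝ → ℂ := S.indicator v with hφdef
      have hφv : φ =ᵐ[μ] v := by
        filter_upwards [hμS] with ω hω
        rw [hφdef, Set.indicator_of_mem hω]
      have hφm : AEStronglyMeasurable φ μ :=
        ((hvmeas.indicator hSmeas).stronglyMeasurable).aestronglyMeasurable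
      have hφbd : ∀ᵐ ω ∂μ, ‖φ ω‖ ≤ 1 / ε := by
        filter_upwards with ω
        rw [hφdef]
        by_cases hω : ω ∈ S
        · rw [Set.indicator_of_mem hω]; exact hvbd ω hω
        · rw [Set.indicator_of_notMem hω]; simp; positivity
      have hφint : Integrable φ μ :=
        memLp_one_iff_integrable.mp (MemLp.of_bound hφm _ hφbd)
      have hintφ : ∫ x, φ x ∂μ = J := by
        rw [integral_congr_ae hφv, hIv]
      refine ⟨φ, MemLp.of_bound hφm _ hφbd, ?_, hφint, ?_⟩
      · intro h0
        have hz : J = 0 := by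
          rw [← hintφ, integral_congr_ae h0]
          simp
        rw [hJ1] at hz
        exact hiKf ((div_eq_zero_iff.mp hz).resolve_left one_ne_zero)
      · filter_upwards [hμS] with ω hω
        have hne' := hne ω hω
        rw [hintφ, hJ1, hφdef, Set.indicator_of_mem hω, hvdef]
        field_simp
        rw [mul_div_cancel_right₀ _ (Complex.ofReal_ne_zero.mpr hK.ne')]; ring
  · -- second conjunct: v is an eigenfunction
    intro hJ1
    filter_upwards [hμS] with ω hω
    have hne' := hne ω hω
    have hIv' : ∫ x : ℝ, 1 / (lam - Complex.I * (x : ℂ)) ∂μ = J := hIv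
    rw [hIv', hJ1]
    field_simp
    rw [mul_div_cancel_right₀ _ (Complex.ofReal_ne_zero.mpr hK.ne')]; ring
end

section
/- Let λ_c be a simple eigenvalue of T₁ = iω + iKf₁𝒫, i.e. a simple root of 1 − iKf₁D(λ) = 0 with Re(λ_c) > 0. Then the Riesz projection Π_c = (1/2πi)∮_γ (λ − T₁)^{−1} dλ around λ_c is the rank-one operator Π_c φ = [−1/D'(λ_c)]·((λ_c − iω)^{−1}φ, P₀)·(λ_c − iω)^{−1}. -/
open Complex Real MeasureTheory Metric

lemma sub_I_mul_ne_zero {lam : ℂ} (h : 0 < lam.re) (x : ℝ) :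
    lam - Complex.I * x ≠ 0 := by
  intro hx
  have := congrArg Complex.re hx
  simp [Complex.sub_re, Complex.mul_re] at this
  linarith

lemma norm_sub_I_mul_ge {lam : ℂ} (x : ℝ) : lam.re ≤ ‖lam - Complex.I * x‖ := by
  have h1 : (lam - Complex.I * x).re = lam.re := by
    simp [Complex.sub_re, Complex.mul_re]
  calc lam.re = (lam - Complex.I * x).re := h1.symm
    _ ≤ |(lam - Complex.I * x).re| := le_abs_self _
    _ ≤ ‖lam - Complex.I * x‖ := Complex.abs_re_le_norm _

lemma F_diff (φ : ℝ → ℂ) (g : ℝ → ℝ)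
    (hmeas : AEStronglyMeasurable (fun x : ℝ => φ x * g x) volume)
    (lam0 : ℂ) (h0 : 0 < lam0.re)
    (hint : Integrable (fun x : ℝ => φ x / (lam0 - Complex.I * x) * g x)) :
    DifferentiableAt ℂ (fun lam : ℂ => ∫ x : ℝ, φ x / (lam - Complex.I * x) * g x) lam0 := by
  set c := lam0.re with hc
  have hεpos : (0:ℝ) < c / 2 := by positivity
  have hre : ∀ lam ∈ ball lam0 (c/2), c / 2 ≤ lam.re := by
    intro lam hm
    have : dist lam lam0 < c / 2 := hm
    have h2 : |lam.re - lam0.re| ≤ dist lam lam0 := by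
      rw [dist_eq_norm]
      simpa using Complex.abs_re_le_norm (lam - lam0)
    rw [abs_le] at h2
    simp only [hc] at *
    linarith
  have key := hasDerivAt_integral_of_dominated_loc_of_deriv_le (μ := volume)
    (F := fun (lam : ℂ) (a : ℝ) => φ a / (lam - Complex.I * a) * g a)
    (F' := fun (lam : ℂ) (a : ℝ) => -(φ a * g a) * ((lam - Complex.I * a)^2)⁻¹)
    (x₀ := lam0) (bound := fun a => 4 / c * ‖φ a / (lam0 - Complex.I * a) * g a‖)
    (ball_mem_nhds lam0 hεpos) ?_ hint ?_ ?_ ?_ ?_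
  · exact key.2.differentiableAt
  · -- measurability near lam0
    filter_upwards [ball_mem_nhds lam0 hεpos] with lam hm
    have hlr : 0 < lam.re := lt_of_lt_of_le hεpos (hre lam hm)
    have hcont : Continuous fun a : ℝ => ((lam - Complex.I * a)⁻¹ : ℂ) := by
      apply Continuous.inv₀ (by continuity)
      exact fun a => sub_I_mul_ne_zero hlr a
    have := hmeas.mul hcont.aestronglyMeasurable
    refine this.congr (Filter.Eventually.of_forall fun a => ?_)
    rw [Pi.mul_apply]
    field_simp
  · -- measurability of F' at lam0
    have hcont : Continuous fun a : ℝ => ((((lam0 - Complex.I * a))^2)⁻¹ : ℂ) := by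
      apply Continuous.inv₀ (by continuity)
      exact fun a => pow_ne_zero _ (sub_I_mul_ne_zero h0 a)
    exact (hmeas.neg).mul hcont.aestronglyMeasurable
  · -- bound
    refine Filter.Eventually.of_forall fun a => fun lam hm => ?_
    have hlr : c / 2 ≤ lam.re := hre lam hm
    have ht : c / 2 ≤ ‖lam - Complex.I * a‖ := le_trans hlr (norm_sub_I_mul_ge a)
    have hs0 : 0 < ‖lam0 - Complex.I * a‖ := lt_of_lt_of_le h0 (norm_sub_I_mul_ge a)
    have ht0 : 0 < ‖lam - Complex.I * a‖ := lt_of_lt_of_le hεpos ht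
    have hst : ‖lam0 - Complex.I * a‖ ≤ 2 * ‖lam - Complex.I * a‖ := by
      have : ‖lam0 - Complex.I * a‖ ≤ ‖lam - Complex.I * a‖ + ‖lam0 - lam‖ := by
        have := norm_sub_le (lam - Complex.I * a) (lam - lam0)
        simpa [sub_sub_self, norm_sub_rev] using this
      have hd : ‖lam0 - lam‖ < c / 2 := by
        rw [norm_sub_rev]; exact mem_ball_iff_norm.mp hm
      linarith
    have hnorm : ‖-(φ a * g a) * (((lam - Complex.I * a))^2)⁻¹‖
        = ‖φ a * g a‖ / ‖lam - Complex.I * a‖^2 := by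
      rw [norm_mul, norm_neg, norm_inv, norm_pow, div_eq_mul_inv]
    have hrhs : ‖φ a / (lam0 - Complex.I * a) * g a‖
        = ‖φ a * g a‖ / ‖lam0 - Complex.I * a‖ := by
      rw [norm_mul, norm_div, norm_mul]
      push_cast
      ring
    rw [hnorm, hrhs]
    rw [div_mul_div_comm, div_le_div_iff₀ (by positivity) (by positivity)]
    have hct : c ≤ 2 * ‖lam - Complex.I * a‖ := by linarith
    have hcs : c * ‖lam0 - Complex.I * a‖
        ≤ (2 * ‖lam - Complex.I * a‖) * (2 * ‖lam - Complex.I * a‖) :=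
      mul_le_mul hct hst (le_of_lt hs0) (by positivity)
    nlinarith [norm_nonneg (φ a * (g a : ℂ))]
  · exact (hint.norm.const_mul _)
  · -- derivative
    refine Filter.Eventually.of_forall fun a => fun lam hm => ?_
    have hlr : 0 < lam.re := lt_of_lt_of_le hεpos (hre lam hm)
    have hne : lam - Complex.I * a ≠ 0 := sub_I_mul_ne_zero hlr a
    have h1 : HasDerivAt (fun l : ℂ => (l - Complex.I * a)⁻¹)
        (-1 / (lam - Complex.I * a)^2) lam := by
      exact (by simpa using (((hasDerivAt_id lam).sub_const (Complex.I * a)).inv hne) :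
        HasDerivAt (fun x : ℂ => x - Complex.I * a)⁻¹ (-1 / (lam - Complex.I * a)^2) lam)
    have h2 := h1.const_mul (φ a * g a)
    have h3 : (fun l : ℂ => φ a * ↑(g a) * (l - Complex.I * a)⁻¹)
        = fun l => φ a / (l - Complex.I * a) * ↑(g a) := by
      funext l; ring
    have h4 : φ a * ↑(g a) * (-1 / (lam - Complex.I * a)^2)
        = -(φ a * ↑(g a)) * ((lam - Complex.I * a)^2)⁻¹ := by ring
    rw [h3, h4] at h2
    exact h2

set_option maxHeartbeats 1000000

/-- Riesz projection at a simple eigenvalue `λ_c` of `T₁ = iω + iKf₁𝒫`: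
the contour integral `(1/2πi)∮ (λ - T₁)⁻¹ dλ` around `λ_c` is the rank-one
operator `Π_c φ = [-1/D'(λ_c)]((λ_c - iω)⁻¹φ, P₀)(λ_c - iω)⁻¹`. -/
theorem riesz_projection_formula
    (g : ℝ → ℝ) (hg : Integrable g)
    (K : ℝ) (f₁ : ℂ) (hf₁ : f₁ ≠ 0)
    (D : ℂ → ℂ)
    (hD : ∀ lam : ℂ, 0 < lam.re →
      D lam = ∫ ω : ℝ, (g ω : ℂ) / (lam - Complex.I * ω))
    (lamc : ℂ) (hlamc : 0 < lamc.re)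
    (heig : 1 - Complex.I * K * f₁ * D lamc = 0)
    (hsimple : deriv D lamc ≠ 0)
    (r : ℝ) (hr : 0 < r)
    (hball : ∀ lam ∈ Metric.closedBall lamc r, 0 < lam.re ∧ DifferentiableAt ℂ D lam)
    (honly : ∀ lam ∈ Metric.closedBall lamc r, lam ≠ lamc →
      1 - Complex.I * K * f₁ * D lam ≠ 0)
    (φ : ℝ → ℂ)
    (hφint : ∀ lam ∈ Metric.closedBall lamc r,
      Integrable (fun ω : ℝ => φ ω / (lam - Complex.I * ω) * g ω)) :
    ∀ ω : ℝ,
      (2 * π * Complex.I)⁻¹ *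
        (∮ lam in C(lamc, r),
          (φ ω / (lam - Complex.I * ω) +
            (Complex.I * K * f₁ / (1 - Complex.I * K * f₁ * D lam)) *
              (∫ x : ℝ, φ x / (lam - Complex.I * x) * g x) / (lam - Complex.I * ω)))
      = (-1 / deriv D lamc) *
          (∫ x : ℝ, φ x / (lamc - Complex.I * x) * g x) * (1 / (lamc - Complex.I * ω)) := by
  intro ω
  set h : ℂ → ℂ := fun lam => 1 - Complex.I * K * f₁ * D lam with hh
  set F : ℂ → ℂ := fun lam => ∫ x : ℝ, φ x / (lam - Complex.I * x) * g x with hF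
  have hcmem : lamc ∈ Metric.closedBall lamc r := mem_closedBall_self hr.le
  -- iKf₁ ≠ 0
  have h1 : Complex.I * K * f₁ * D lamc = 1 := by linear_combination -heig
  have hIK : (Complex.I * K * f₁ : ℂ) ≠ 0 :=
    left_ne_zero_of_mul (h1 ▸ (one_ne_zero : (1:ℂ) ≠ 0))
  -- h differentiable on closed ball
  have hhd : ∀ lam ∈ Metric.closedBall lamc r, DifferentiableAt ℂ h lam := fun lam hm =>
    (differentiableAt_const 1).sub
      ((differentiableAt_const (Complex.I * K * f₁)).mul (hball lam hm).2)
  -- derivative of h at lamc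
  have hd0 : HasDerivAt h (-(Complex.I * K * f₁ * deriv D lamc)) lamc := by
    have hD' := ((hball lamc hcmem).2).hasDerivAt
    exact (hD'.const_mul (Complex.I * K * f₁)).const_sub 1
  -- q = dslope h lamc
  set q : ℂ → ℂ := dslope h lamc with hq
  have hqc : q lamc = -(Complex.I * K * f₁ * deriv D lamc) := by
    rw [hq, dslope_same, hd0.deriv]
  have hfac : ∀ lam : ℂ, lam ≠ lamc → h lam = (lam - lamc) * q lam := by
    intro lam hne
    rw [hq, dslope_of_ne _ hne, slope_def_field]
    have : h lamc = 0 := heig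
    rw [this, sub_zero, mul_comm (lam - lamc),
      div_mul_cancel₀ _ (sub_ne_zero.mpr hne)]
  have hq_ne : ∀ lam ∈ Metric.closedBall lamc r, q lam ≠ 0 := by
    intro lam hm
    by_cases he : lam = lamc
    · rw [he, hqc]
      exact neg_ne_zero.mpr (mul_ne_zero hIK hsimple)
    · intro h0
      have := hfac lam he
      rw [h0, mul_zero] at this
      exact honly lam hm he this
  -- q differentiable on closed ball
  have hqd : ∀ lam ∈ Metric.closedBall lamc r, DifferentiableAt ℂ q lam := by
    intro lam hm
    by_cases he : lam = lamc
    · rw [he]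
      have hOn : DifferentiableOn ℂ h (ball lamc r) := fun z hz =>
        (hhd z (ball_subset_closedBall hz)).differentiableWithinAt
      have hA : AnalyticAt ℂ h lamc := hOn.analyticAt (isOpen_ball.mem_nhds (mem_ball_self hr))
      obtain ⟨p, hp⟩ := hA
      have hA2 : AnalyticAt ℂ (dslope h lamc) lamc :=
        ⟨p.fslope, hp.has_fpower_series_dslope_fslope⟩
      exact hA2.differentiableAt
    · exact (differentiableAt_dslope_of_ne he).mpr (hhd lam hm)
  -- F differentiable on closed ball
  have hmeas : AEStronglyMeasurable (fun x : ℝ => φ x * g x) volume := by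
    have m0 := (hφint lamc hcmem).aestronglyMeasurable
    have hcont : Continuous fun x : ℝ => (lamc - Complex.I * x : ℂ) := by continuity
    refine (m0.mul hcont.aestronglyMeasurable).congr
      (Filter.Eventually.of_forall fun x => ?_)
    have := sub_I_mul_ne_zero hlamc x
    rw [Pi.mul_apply]
    field_simp
  have hFd : ∀ lam ∈ Metric.closedBall lamc r, DifferentiableAt ℂ F lam := fun lam hm =>
    F_diff φ g hmeas lam (hball lam hm).1 (hφint lam hm)
  -- nonvanishing of lam - iω on closed ball
  have hω : ∀ lam ∈ Metric.closedBall lamc r, lam - Complex.I * ω ≠ 0 := fun lam hm =>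
    sub_I_mul_ne_zero (hball lam hm).1 ω
  -- auxiliary holomorphic function w
  set w : ℂ → ℂ := fun lam => (lam - lamc) * (φ ω / (lam - Complex.I * ω)) +
      (Complex.I * K * f₁) * F lam / (q lam * (lam - Complex.I * ω)) with hw
  have hwd : ∀ lam ∈ Metric.closedBall lamc r, DifferentiableAt ℂ w lam := by
    intro lam hm
    have hne := hω lam hm
    apply DifferentiableAt.add
    · exact (differentiableAt_id.sub (differentiableAt_const lamc)).mul
        ((differentiableAt_const (φ ω)).div
          (differentiableAt_id.sub (differentiableAt_const (Complex.I * ω))) hne)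
    · exact ((differentiableAt_const (Complex.I * K * f₁)).mul (hFd lam hm)).div
        ((hqd lam hm).mul
          (differentiableAt_id.sub (differentiableAt_const (Complex.I * ω))))
        (mul_ne_zero (hq_ne lam hm) hne)
  -- Cauchy integral formula for w
  have hcont : ContinuousOn w (Metric.closedBall lamc r) := fun lam hm =>
    (hwd lam hm).continuousAt.continuousWithinAt
  have key := Complex.circleIntegral_sub_inv_smul_of_differentiable_on_off_countable
    (s := (∅ : Set ℂ)) Set.countable_empty (mem_ball_self hr) hcont
    (fun z hz => hwd z (ball_subset_closedBall hz.1))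
  -- the integrand equals (z - lamc)⁻¹ • w z on the sphere
  have hEq : Set.EqOn
      (fun lam : ℂ => φ ω / (lam - Complex.I * ω) +
        (Complex.I * K * f₁ / (1 - Complex.I * K * f₁ * D lam)) *
          (∫ x : ℝ, φ x / (lam - Complex.I * x) * g x) / (lam - Complex.I * ω))
      (fun lam : ℂ => (lam - lamc)⁻¹ • w lam) (sphere lamc r) := by
    intro lam hm
    have hm' : lam ∈ Metric.closedBall lamc r := sphere_subset_closedBall hm
    have hne : lam ≠ lamc := by
      intro he
      rw [mem_sphere_iff_norm, he, sub_self, norm_zero] at hm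
      exact hr.ne' hm.symm
    have hsub : lam - lamc ≠ 0 := sub_ne_zero.mpr hne
    have hqne := hq_ne lam hm'
    have hωne := hω lam hm'
    have hhlam : (1 - Complex.I * K * f₁ * D lam) = (lam - lamc) * q lam := hfac lam hne
    simp only [hw, smul_eq_mul]
    rw [hhlam]
    rw [show (∫ x : ℝ, φ x / (lam - Complex.I * x) * g x) = F lam from rfl]
    field_simp
  rw [circleIntegral.integral_congr hr.le hEq]
  have : (∮ z in C(lamc, r), (z - lamc)⁻¹ • w z) = (2 * π * Complex.I : ℂ) • w lamc := key
  rw [this, smul_eq_mul, ← mul_assoc,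
    inv_mul_cancel₀ Complex.two_pi_I_ne_zero, one_mul]
  -- compute w lamc
  rw [hw]
  simp only [sub_self, zero_mul, zero_add, hqc]
  rw [show F lamc = (∫ x : ℝ, φ x / (lamc - Complex.I * x) * g x) from rfl]
  have hωc := hω lamc hcmem
  have hK : (K : ℂ) ≠ 0 := by
    intro hK0; apply hIK; rw [hK0]; ring
  field_simp
end

section
/- Define T₂^{−1} : H₊ → H₊' by ⟨T₂^{−1}φ | ψ*⟩ = −(1/2) lim_{λ→+0} ∫_ℝ φ(ω)ψ(ω)g(ω)/(λ − iω) dω, where the limit is from the right half plane. Then T₂^{−1}(T₂φ) = φ for all φ ∈ H₊, where T₂ is the multiplication operator (T₂φ)(ω) = 2iω φ(ω). -/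
open Complex Real MeasureTheory Filter Topology

/-- The operator `T₂⁻¹` defined by
`⟨T₂⁻¹φ | ψ*⟩ = -(1/2) lim_{λ→+0} ∫ φψg/(λ - iω) dω` is a left inverse of the
multiplication operator `T₂φ = 2iωφ` in the pairing with `ψ ∈ H₊`: for any
`φ, ψ` bounded holomorphic on the closed upper half plane,
`lim_{x→0⁺} ∫ (2iωφ)ψg/(x - iω) dω = -2 ∫ φψg dω`. -/
theorem T2_inverse
    (δ : ℝ) (hδ : 0 < δ) (g : ℂ → ℂ)
    (hg : ∀ z : ℂ, 0 ≤ z.im ∧ z.im ≤ δ → DifferentiableAt ℂ g z)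
    (C : ℝ)
    (hdecay : ∀ z : ℂ, 0 ≤ z.im ∧ z.im ≤ δ →
      ‖g z‖ ≤ C / (1 + ‖z‖ ^ 2))
    (φ ψ : ℂ → ℂ)
    (hφ : ∀ z : ℂ, 0 ≤ z.im → DifferentiableAt ℂ φ z)
    (hψ : ∀ z : ℂ, 0 ≤ z.im → DifferentiableAt ℂ ψ z)
    (Cφ Cψ : ℝ)
    (hφb : ∀ z : ℂ, 0 ≤ z.im → ‖φ z‖ ≤ Cφ)
    (hψb : ∀ z : ℂ, 0 ≤ z.im → ‖ψ z‖ ≤ Cψ) :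
    Tendsto
      (fun x : ℝ => ∫ ω : ℝ,
        (2 * Complex.I * ω * φ ω) * ψ ω * g ω / ((x : ℂ) - Complex.I * ω))
      (nhdsWithin 0 (Set.Ioi 0))
      (nhds (-2 * ∫ ω : ℝ, φ ω * ψ ω * g ω)) := by
  -- continuity of φ, ψ, g along the real line
  have hφc : Continuous fun ω : ℝ => φ ω := by
    refine continuous_iff_continuousAt.2 fun ω => ?_
    exact (hφ ω (by simp)).continuousAt.comp Complex.continuous_ofReal.continuousAt
  have hψc : Continuous fun ω : ℝ => ψ ω := by
    refine continuous_iff_continuousAt.2 fun ω => ?_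
    exact (hψ ω (by simp)).continuousAt.comp Complex.continuous_ofReal.continuousAt
  have hgc : Continuous fun ω : ℝ => g ω := by
    refine continuous_iff_continuousAt.2 fun ω => ?_
    exact (hg ω ⟨by simp, by simpa using hδ.le⟩).continuousAt.comp
      Complex.continuous_ofReal.continuousAt
  have hfc : Continuous fun ω : ℝ => φ ω * ψ ω * g ω := (hφc.mul hψc).mul hgc
  -- nonnegativity of the constants
  have hCφ0 : 0 ≤ Cφ := (norm_nonneg _).trans (hφb 0 (by simp))
  have hCψ0 : 0 ≤ Cψ := (norm_nonneg _).trans (hψb 0 (by simp))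
  have hC0 : 0 ≤ C := by
    have h := hdecay 0 ⟨by simp, by simpa using hδ.le⟩
    simp at h
    exact (norm_nonneg _).trans h
  -- pointwise bound on φψg
  have hfb : ∀ ω : ℝ, ‖φ ω * ψ ω * g ω‖ ≤ Cφ * Cψ * C * (1 + ω ^ 2)⁻¹ := by
    intro ω
    have h1 := hφb ω (by simp)
    have h2 := hψb ω (by simp)
    have h3 := hdecay ω ⟨by simp, by simpa using hδ.le⟩
    have habs : ‖(ω : ℂ)‖ ^ 2 = ω ^ 2 := by
      rw [Complex.norm_real, Real.norm_eq_abs]; exact sq_abs ω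
    rw [habs] at h3
    have hnorm : ‖φ ω * ψ ω * g ω‖
        = ‖φ ω‖ * ‖ψ ω‖ * ‖g ω‖ := by
      simp [Complex.norm_def]
    rw [hnorm]
    calc ‖φ ω‖ * ‖ψ ω‖ * ‖g ω‖
        ≤ Cφ * Cψ * (C / (1 + ω ^ 2)) :=
          mul_le_mul (mul_le_mul h1 h2 (norm_nonneg _) hCφ0) h3
            (norm_nonneg _) (mul_nonneg hCφ0 hCψ0)
      _ = Cφ * Cψ * C * (1 + ω ^ 2)⁻¹ := by ring
  -- integrability of φψg
  have hfi : Integrable fun ω : ℝ => φ ω * ψ ω * g ω :=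
    (integrable_inv_one_add_sq.const_mul (Cφ * Cψ * C)).mono'
      hfc.aestronglyMeasurable (ae_of_all _ hfb)
  -- the denominator is bounded below by x
  have hden : ∀ x : ℝ, 0 < x → ∀ ω : ℝ, x ≤ ‖(x : ℂ) - Complex.I * ω‖ := by
    intro x hx ω
    have hre : ((x : ℂ) - Complex.I * ω).re = x := by simp
    calc x = |((x : ℂ) - Complex.I * ω).re| := by rw [hre, abs_of_pos hx]
      _ ≤ ‖(x : ℂ) - Complex.I * ω‖ := Complex.abs_re_le_norm _
  have hne : ∀ x : ℝ, 0 < x → ∀ ω : ℝ, (x : ℂ) - Complex.I * ω ≠ 0 := by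
    intro x hx ω h
    have := hden x hx ω
    rw [h] at this
    simp at this
    linarith
  -- continuity of the denominator
  have hdenc : ∀ x : ℝ, Continuous fun ω : ℝ => (x : ℂ) - Complex.I * ω :=
    fun x => continuous_const.sub (continuous_const.mul Complex.continuous_ofReal)
  -- integrability of φψg/(x - iω) for x > 0
  have hint2 : ∀ x : ℝ, 0 < x →
      Integrable fun ω : ℝ => φ ω * ψ ω * g ω / ((x : ℂ) - Complex.I * ω) := by
    intro x hx
    refine (integrable_inv_one_add_sq.const_mul (Cφ * Cψ * C / x)).mono'
      (hfc.div (hdenc x) (fun ω => hne x hx ω)).aestronglyMeasurable (ae_of_all _ fun ω => ?_)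
    rw [norm_div]
    calc ‖φ ω * ψ ω * g ω‖ / ‖(x : ℂ) - Complex.I * ω‖
        ≤ (Cφ * Cψ * C * (1 + ω ^ 2)⁻¹) / x :=
          div_le_div₀ (by positivity) (hfb ω) hx (hden x hx ω)
      _ = Cφ * Cψ * C / x * (1 + ω ^ 2)⁻¹ := by ring
  -- the remainder term tends to 0
  have hG : Tendsto (fun x : ℝ => ∫ ω : ℝ,
      2 * (x : ℂ) * (φ ω * ψ ω * g ω / ((x : ℂ) - Complex.I * ω)))
      (nhdsWithin 0 (Set.Ioi 0)) (nhds 0) := by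
    have h0 : (0 : ℂ) = ∫ _ : ℝ, (0 : ℂ) := by simp
    rw [h0]
    apply tendsto_integral_filter_of_dominated_convergence
      (fun ω => 2 * (Cφ * Cψ * C) * (1 + ω ^ 2)⁻¹)
    · filter_upwards [self_mem_nhdsWithin] with x hx
      exact (continuous_const.mul
        (hfc.div (hdenc x) (fun ω => hne x hx ω))).aestronglyMeasurable
    · filter_upwards [self_mem_nhdsWithin] with x hx
      refine ae_of_all _ fun ω => ?_
      have hx' : (0:ℝ) < x := hx
      have hd := hden x hx' ω
      have h2x : ‖(2 : ℂ) * (x : ℂ)‖ = 2 * x := by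
        rw [norm_mul]
        simp [abs_of_pos hx']
      have hstep : ‖φ ω * ψ ω * g ω‖ / ‖(x : ℂ) - Complex.I * ω‖
          ≤ ‖φ ω * ψ ω * g ω‖ / x :=
        div_le_div₀ (norm_nonneg _) le_rfl hx' hd
      rw [norm_mul, norm_div, h2x]
      calc 2 * x * (‖φ ω * ψ ω * g ω‖ / ‖(x : ℂ) - Complex.I * ω‖)
          ≤ 2 * x * (‖φ ω * ψ ω * g ω‖ / x) :=
            mul_le_mul_of_nonneg_left hstep (by positivity)
        _ = 2 * ‖φ ω * ψ ω * g ω‖ := by field_simp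
        _ ≤ 2 * (Cφ * Cψ * C * (1 + ω ^ 2)⁻¹) := by linarith [hfb ω]
        _ = 2 * (Cφ * Cψ * C) * (1 + ω ^ 2)⁻¹ := by ring
    · exact integrable_inv_one_add_sq.const_mul _
    · have hae : ∀ᵐ ω : ℝ, ω ≠ 0 := by
        filter_upwards [compl_mem_ae_iff.mpr (measure_singleton (0:ℝ))] with ω h
        simpa using h
      filter_upwards [hae] with ω hω
      have hdne : (((0:ℝ)) : ℂ) - Complex.I * ω ≠ 0 := by
        simp only [Complex.ofReal_zero, zero_sub, neg_ne_zero]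
        exact mul_ne_zero Complex.I_ne_zero (by exact_mod_cast hω)
      have hcont : ContinuousAt (fun x : ℝ =>
          2 * (x : ℂ) * (φ ω * ψ ω * g ω / ((x : ℂ) - Complex.I * ω))) 0 :=
        ((continuous_const.mul Complex.continuous_ofReal).continuousAt).mul
          (ContinuousAt.div continuousAt_const
            ((Complex.continuous_ofReal.sub continuous_const).continuousAt) hdne)
      have htd := hcont.tendsto
      have h00 : 2 * (((0:ℝ)) : ℂ) * (φ ω * ψ ω * g ω / ((((0:ℝ)) : ℂ) - Complex.I * ω))
          = 0 := by simp
      rw [h00] at htd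
      exact htd.mono_left nhdsWithin_le_nhds
  -- the decomposition of the integral, valid for x > 0
  have key : ∀ x : ℝ, x ∈ Set.Ioi (0:ℝ) →
      (∫ ω : ℝ, (2 * Complex.I * ω * φ ω) * ψ ω * g ω / ((x : ℂ) - Complex.I * ω))
      = (-2 * ∫ ω : ℝ, φ ω * ψ ω * g ω)
        + ∫ ω : ℝ, 2 * (x : ℂ) * (φ ω * ψ ω * g ω / ((x : ℂ) - Complex.I * ω)) := by
    intro x hx
    have hx' : (0:ℝ) < x := hx
    have heq : ∀ ω : ℝ,
        (2 * Complex.I * ω * φ ω) * ψ ω * g ω / ((x : ℂ) - Complex.I * ω)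
        = (-2) * (φ ω * ψ ω * g ω)
          + 2 * (x : ℂ) * (φ ω * ψ ω * g ω / ((x : ℂ) - Complex.I * ω)) := by
      intro ω
      have h := hne x hx' ω
      field_simp
      ring
    rw [integral_congr_ae (ae_of_all _ heq), integral_add (hfi.const_mul (-2))
      ((hint2 x hx').const_mul (2 * (x : ℂ))), integral_const_mul]
  -- conclude
  have hfinal : Tendsto (fun x : ℝ =>
      (-2 * ∫ ω : ℝ, φ ω * ψ ω * g ω)
      + ∫ ω : ℝ, 2 * (x : ℂ) * (φ ω * ψ ω * g ω / ((x : ℂ) - Complex.I * ω)))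
      (nhdsWithin 0 (Set.Ioi 0))
      (nhds ((-2 * ∫ ω : ℝ, φ ω * ψ ω * g ω) + 0)) := tendsto_const_nhds.add hG
  rw [add_zero] at hfinal
  refine hfinal.congr' ?_
  filter_upwards [self_mem_nhdsWithin] with x hx
  exact (key x hx).symm
end
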